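/- For all integers n ≥ 4 and all positive integers m, the graph R_m(C_n) has tree-chromatic number exactly 2. -/

import Mathlib

open SimpleGraph

universe u
variable {V : Type u}

/-- Closed neighborhood of a vertex set. -/
def closedNbhd (G : SimpleGraph V) (U : Set V) : Set V :=
  U ∪ {v | ∃ u ∈ U, G.Adj u v}

/-- Bag `X_ℓ = N[{v_1,…,v_ℓ}] \ {v_1,…,v_{ℓ-1}}` of the enumeration `σ`. -/
def bagX {n : ℕ} (G : SimpleGraph V) (σ : Fin n ≃ V) (ℓ : Fin n) : Set V :=
  closedNbhd G {v | ∃ j ≤ ℓ, v = σ j} \ {v | ∃ j < ℓ, v = σ j}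

/-- Chromatic number of the subgraph induced by `S`. -/
noncomputable def chrom (G : SimpleGraph V) (S : Set V) : ℕ :=
  sInf {k | (G.induce S).Colorable k}

/-- Chromatic number of the path-decomposition `P_σ^G`. -/
noncomputable def decompChrom {n : ℕ} (G : SimpleGraph V) (σ : Fin n ≃ V) : ℕ :=
  sInf {k | ∀ ℓ, (G.induce (bagX G σ ℓ)).Colorable k}

/-- `B` is a path-decomposition of `G`. -/
def IsPathDecomp (G : SimpleGraph V) {s : ℕ} (B : Fin s → Set V) : Prop :=
  (∀ v, ∃ t, v ∈ B t) ∧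
  (∀ u v, G.Adj u v → ∃ t, u ∈ B t ∧ v ∈ B t) ∧
  (∀ v (t₁ t₂ t₃ : Fin s), t₁ ≤ t₂ → t₂ ≤ t₃ → v ∈ B t₁ → v ∈ B t₃ → v ∈ B t₂)

/-- Path-chromatic number. -/
noncomputable def pathChromatic (G : SimpleGraph V) : ℕ :=
  sInf {k | ∃ (s : ℕ) (B : Fin s → Set V), IsPathDecomp G B ∧
    ∀ t, (G.induce (B t)).Colorable k}

/-- `(T, B)` is a tree-decomposition of `G`. -/
def IsTreeDecomp {ι : Type u} (G : SimpleGraph V) (T : SimpleGraph ι) (B : ι → Set V) : Prop :=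
  T.IsTree ∧
  (∀ v, ∃ t, v ∈ B t) ∧
  (∀ u v, G.Adj u v → ∃ t, u ∈ B t ∧ v ∈ B t) ∧
  (∀ v, (T.induce {t | v ∈ B t}).Connected)

/-- Tree-chromatic number. -/
noncomputable def treeChromatic (G : SimpleGraph V) : ℕ :=
  sInf {k | ∃ (ι : Type u) (T : SimpleGraph ι) (B : ι → Set V),
    IsTreeDecomp G T B ∧ ∀ t, (G.induce (B t)).Colorable k}

/-- A special enumeration. -/
def IsSpecial {n : ℕ} (G : SimpleGraph V) (σ : Fin n ≃ V) : Prop :=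
  decompChrom G σ = pathChromatic G ∧
  ∀ i : Fin n, chrom G (bagX G σ i) = pathChromatic G →
    ∀ j : Fin n, j < i → ¬ G.Adj (σ j) (σ i)

/-- The graph `R_m(G)`; the vertex `(i, none)` plays the role of `(i, v₀)`. -/
def Rm (G : SimpleGraph V) (m : ℕ) : SimpleGraph (Fin m × Option V) :=
  SimpleGraph.fromRel (fun p q =>
    (p.1 = q.1 ∧ p.2 = none) ∨
    (p.1 ≠ q.1 ∧ ∃ u v, p.2 = some u ∧ q.2 = some v ∧ G.Adj u v))

/-- `[I, U] = { (i, v) : i ∈ I, v ∈ U }` inside `R_m(G)`. -/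
def box {m : ℕ} (I : Set (Fin m)) (U : Set V) : Set (Fin m × Option V) :=
  {p | p.1 ∈ I ∧ ∃ v ∈ U, p.2 = some v}

/-- Index of the first vertex in the enumeration `μ` satisfying `P`. -/
noncomputable def firstIdx {N : ℕ} {W : Type*} (μ : Fin N ≃ W) (P : W → Prop) : ℕ :=
  sInf {ℓ : ℕ | ∃ h : ℓ < N, P (μ ⟨ℓ, h⟩)}

/-- The cycle `C_n`: `v_j ~ v_{j'}` iff `|j - j'| ∈ {1, n-1}`. -/
def cyc (n : ℕ) : SimpleGraph (Fin n) :=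
  SimpleGraph.fromRel (fun a b => (b : ℕ) - (a : ℕ) = 1 ∨ (b : ℕ) - (a : ℕ) = n - 1)

/-- The Mycielskian of a graph. -/
def mycielskian (G : SimpleGraph V) : SimpleGraph (Option (V ⊕ V)) :=
  SimpleGraph.fromRel (fun a b =>
    match a, b with
    | some (Sum.inl u), some (Sum.inl v) => G.Adj u v
    | some (Sum.inr u), some (Sum.inl v) => G.Adj u v
    | none, some (Sum.inr _) => True
    | _, _ => False)

/-- Vertex types and graphs of the Mycielski family: `MycS 2` is a single edge. -/
def MycS : ℕ → Σ W : Type, SimpleGraph W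
  | 0 => ⟨Empty, ⊥⟩
  | 1 => ⟨Empty, ⊥⟩
  | 2 => ⟨Fin 2, ⊤⟩
  | (n + 3) => ⟨Option ((MycS (n + 2)).1 ⊕ (MycS (n + 2)).1), mycielskian (MycS (n + 2)).2⟩

/-- The vertex type of the `k`-Mycielski graph. -/
def MycV (k : ℕ) : Type := (MycS k).1

/-- The `k`-Mycielski graph `M_k`. -/
def Myc (k : ℕ) : SimpleGraph (MycV k) := (MycS k).2
section Stmt13Aux

/-- The star tree on `Option (Fin m)` with center `none`. -/
private def starT (m : ℕ) : SimpleGraph (Option (Fin m)) :=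
  SimpleGraph.fromRel (fun a _ => a = none)

private lemma starT_adj {m : ℕ} {a b : Option (Fin m)} :
    (starT m).Adj a b ↔ a ≠ b ∧ (a = none ∨ b = none) := Iff.rfl

private lemma reach_eq_of_isolated {W : Type} {G : SimpleGraph W} {a : W}
    (h : ∀ c, ¬ G.Adj a c) {b : W} (hr : G.Reachable a b) : a = b := by
  obtain ⟨w⟩ := hr
  cases w with
  | nil => rfl
  | cons hadj _ => exact absurd hadj (h _)

private lemma starT_isolated {m : ℕ} (x : Fin m) (c : Option (Fin m)) :
    ¬ ((starT m) \ SimpleGraph.fromEdgeSet {s((none : Option (Fin m)), some x)}).Adj (some x) c := by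
  intro h
  rw [SimpleGraph.sdiff_adj] at h
  obtain ⟨hadj, hdel⟩ := h
  rw [starT_adj] at hadj
  obtain ⟨hne, hor⟩ := hadj
  rcases hor with h | h
  · exact Option.some_ne_none x h
  · subst h
    apply hdel
    rw [SimpleGraph.fromEdgeSet_adj]
    exact ⟨by rw [Sym2.eq_swap]; exact rfl, hne⟩

private lemma starT_isTree (m : ℕ) : (starT m).IsTree := by
  constructor
  · rw [SimpleGraph.connected_iff_exists_forall_reachable]
    refine ⟨none, fun w => ?_⟩
    cases w with
    | none => exact SimpleGraph.Reachable.refl _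
    | some y =>
      exact SimpleGraph.Adj.reachable
        (starT_adj.2 ⟨fun h => by simp at h, Or.inl rfl⟩)
  · rw [SimpleGraph.isAcyclic_iff_forall_adj_isBridge]
    intro a b hab
    have hab' := hab
    rw [starT_adj] at hab'
    obtain ⟨hne, hor⟩ := hab'
    rcases hor with h | h
    · subst h
      -- a = none, b = some y
      cases b with
      | none => exact absurd rfl hne
      | some y =>
        rw [SimpleGraph.isBridge_iff]
        refine fun hr => ?_
        have := reach_eq_of_isolated (starT_isolated y) hr.symm
        exact Option.some_ne_none y this
    · subst h
      -- b = none, a = some y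
      cases a with
      | none => exact absurd rfl hne
      | some y =>
        rw [show s(some y, (none : Option (Fin m))) = s((none : Option (Fin m)), some y)
          from Sym2.eq_swap]
        rw [SimpleGraph.isBridge_iff]
        refine fun hr => ?_
        have := reach_eq_of_isolated (starT_isolated y) hr.symm
        exact Option.some_ne_none y this

/-- Bags: center bag is everything at levels `≠ 0`; the leaf bag of `x` is
row `x` (including its `none`) together with everyone's levels `1` and `n-1`. -/
private def bagB (n m : ℕ) : Option (Fin m) → Set (Fin m × Option (Fin n))
  | none => {p | ∃ k : Fin n, p.2 = some k ∧ (k : ℕ) ≠ 0}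
  | some x => {p | p.1 = x ∨ ∃ k : Fin n, p.2 = some k ∧ ((k : ℕ) = 1 ∨ (k : ℕ) = n - 1)}

private lemma rm_adj {n m : ℕ} {p q : Fin m × Option (Fin n)} :
    (Rm (cyc n) m).Adj p q ↔ p ≠ q ∧
      (((p.1 = q.1 ∧ p.2 = none) ∨
        (p.1 ≠ q.1 ∧ ∃ u v, p.2 = some u ∧ q.2 = some v ∧ (cyc n).Adj u v)) ∨
       ((q.1 = p.1 ∧ q.2 = none) ∨
        (q.1 ≠ p.1 ∧ ∃ u v, q.2 = some u ∧ p.2 = some v ∧ (cyc n).Adj u v))) :=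
  Iff.rfl

private lemma cyc_adj {n : ℕ} {u v : Fin n} :
    (cyc n).Adj u v ↔ u ≠ v ∧
      (((v : ℕ) - (u : ℕ) = 1 ∨ (v : ℕ) - (u : ℕ) = n - 1) ∨
       ((u : ℕ) - (v : ℕ) = 1 ∨ (u : ℕ) - (v : ℕ) = n - 1)) := Iff.rfl

private lemma bag_vertex_cover {n m : ℕ} (p : Fin m × Option (Fin n)) :
    p ∈ bagB n m (some p.1) := Or.inl rfl

private lemma bag_edge_cover {n m : ℕ} (hn : 4 ≤ n) :
    ∀ p q, (Rm (cyc n) m).Adj p q → ∃ t, p ∈ bagB n m t ∧ q ∈ bagB n m t := by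
  have aux : ∀ p q : Fin m × Option (Fin n),
      ((p.1 = q.1 ∧ p.2 = none) ∨
        (p.1 ≠ q.1 ∧ ∃ u v, p.2 = some u ∧ q.2 = some v ∧ (cyc n).Adj u v)) →
      ∃ t, p ∈ bagB n m t ∧ q ∈ bagB n m t := by
    rintro p q (⟨h1, _⟩ | ⟨h1, u, v, hu, hv, huv⟩)
    · exact ⟨some p.1, Or.inl rfl, Or.inl h1.symm⟩
    · rw [cyc_adj] at huv
      obtain ⟨hne, hd⟩ := huv
      have h1u : (u : ℕ) < n := u.isLt
      have h1v : (v : ℕ) < n := v.isLt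
      by_cases hu0 : (u : ℕ) = 0
      · exact ⟨some p.1, Or.inl rfl, Or.inr ⟨v, hv, by omega⟩⟩
      · by_cases hv0 : (v : ℕ) = 0
        · exact ⟨some q.1, Or.inr ⟨u, hu, by omega⟩, Or.inl rfl⟩
        · exact ⟨none, ⟨u, hu, hu0⟩, ⟨v, hv, hv0⟩⟩
  intro p q hpq
  rw [rm_adj] at hpq
  rcases hpq.2 with h | h
  · exact aux p q h
  · obtain ⟨t, h1, h2⟩ := aux q p h
    exact ⟨t, h2, h1⟩

private lemma induce_connected_of_center {W : Type} {G : SimpleGraph W} {S : Set W}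
    (c : W) (hc : c ∈ S) (h : ∀ t ∈ S, t ≠ c → G.Adj t c) :
    (G.induce S).Connected := by
  rw [SimpleGraph.connected_iff_exists_forall_reachable]
  refine ⟨⟨c, hc⟩, ?_⟩
  rintro ⟨t, ht⟩
  rcases eq_or_ne t c with hte | hte
  · subst hte
    exact SimpleGraph.Reachable.refl _
  · exact SimpleGraph.Adj.reachable
      (show (G.induce S).Adj ⟨c, hc⟩ ⟨t, ht⟩ from (h t ht hte).symm)

private lemma bag_conn {n m : ℕ} (hn : 4 ≤ n) (p : Fin m × Option (Fin n)) :
    ((starT m).induce {t | p ∈ bagB n m t}).Connected := by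
  by_cases hp : p ∈ bagB n m none
  · apply induce_connected_of_center none hp
    intro t ht htne
    exact starT_adj.2 ⟨htne, Or.inr rfl⟩
  · apply induce_connected_of_center (some p.1) (bag_vertex_cover p)
    intro t ht htne
    exfalso
    cases t with
    | none => exact hp ht
    | some y =>
      rcases ht with h1 | ⟨k, hk, h2⟩
      · exact htne (by rw [← h1])
      · exact hp ⟨k, hk, by omega⟩

private lemma cyc_not_parity {n : ℕ} (hn : 4 ≤ n) {u v : Fin n}
    (h : (cyc n).Adj u v) (hu : (u : ℕ) ≠ 0) (hv : (v : ℕ) ≠ 0) :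
    (u : ℕ) % 2 ≠ (v : ℕ) % 2 := by
  rw [cyc_adj] at h
  obtain ⟨hne, hd⟩ := h
  have hne' : (u : ℕ) ≠ (v : ℕ) := fun hh => hne (Fin.val_injective hh)
  have h1u : (u : ℕ) < n := u.isLt
  have h1v : (v : ℕ) < n := v.isLt
  omega

private lemma cyc_not_adj_ends {n : ℕ} (hn : 4 ≤ n) {u v : Fin n}
    (h : (cyc n).Adj u v)
    (hu : (u : ℕ) = 1 ∨ (u : ℕ) = n - 1) (hv : (v : ℕ) = 1 ∨ (v : ℕ) = n - 1) :
    False := by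
  rw [cyc_adj] at h
  obtain ⟨hne, hd⟩ := h
  have hne' : (u : ℕ) ≠ (v : ℕ) := fun hh => hne (Fin.val_injective hh)
  omega

private lemma bag_color {n m : ℕ} (hn : 4 ≤ n) (t : Option (Fin m)) :
    ((Rm (cyc n) m).induce (bagB n m t)).Colorable 2 := by
  classical
  cases t with
  | none =>
    refine ⟨SimpleGraph.Coloring.mk
      (fun pp => ⟨(pp.val.2.elim 0 Fin.val) % 2, by omega⟩) ?_⟩
    rintro ⟨p, hp⟩ ⟨q, hq⟩ hadj hcol
    obtain ⟨kp, hkp, hkp0⟩ := hp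
    obtain ⟨kq, hkq, hkq0⟩ := hq
    have hadj' : (Rm (cyc n) m).Adj p q := hadj
    rw [rm_adj] at hadj'
    simp only [hkp, hkq, Option.elim_some, Fin.mk.injEq] at hcol
    rcases hadj'.2 with (⟨_, hno⟩ | ⟨_, u, v, hu, hv, huv⟩) |
        (⟨_, hno⟩ | ⟨_, u, v, hu, hv, huv⟩)
    · rw [hkp] at hno; simp at hno
    · rw [hkp] at hu; rw [hkq] at hv
      obtain rfl : kp = u := Option.some.inj hu
      obtain rfl : kq = v := Option.some.inj hv
      exact cyc_not_parity hn huv hkp0 hkq0 hcol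
    · rw [hkq] at hno; simp at hno
    · rw [hkq] at hu; rw [hkp] at hv
      obtain rfl : kq = u := Option.some.inj hu
      obtain rfl : kp = v := Option.some.inj hv
      exact cyc_not_parity hn huv hkq0 hkp0 hcol.symm
  | some x =>
    refine ⟨SimpleGraph.Coloring.mk
      (fun pp => if pp.val.1 = x ∧ pp.val.2 ≠ none then 0 else 1) ?_⟩
    rintro ⟨p, hp⟩ ⟨q, hq⟩ hadj hcol
    have hadj' : (Rm (cyc n) m).Adj p q := hadj
    rw [rm_adj] at hadj'
    obtain ⟨hnepq, hbig⟩ := hadj'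
    by_cases h1 : p.1 = x ∧ p.2 ≠ none
    · by_cases h2 : q.1 = x ∧ q.2 ≠ none
      · obtain ⟨h1a, h1b⟩ := h1
        obtain ⟨h2a, h2b⟩ := h2
        rcases hbig with (⟨_, hno⟩ | ⟨hne1, _⟩) | (⟨_, hno⟩ | ⟨hne1, _⟩)
        · exact h1b hno
        · exact hne1 (h1a.trans h2a.symm)
        · exact h2b hno
        · exact hne1 (h2a.trans h1a.symm)
      · dsimp only at hcol
        rw [if_pos h1, if_neg h2] at hcol
        exact absurd hcol (by decide)
    · by_cases h2 : q.1 = x ∧ q.2 ≠ none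
      · dsimp only at hcol
        rw [if_neg h1, if_pos h2] at hcol
        exact absurd hcol (by decide)
      · -- both colored 1: show they cannot be adjacent
        clear hcol
        rcases hq2 : q.2 with _ | kq
        · -- q.2 = none, so q.1 = x
          have hq1 : q.1 = x := by
            rcases hq with h | ⟨k, hk, _⟩
            · exact h
            · rw [hq2] at hk; simp at hk
          rcases hp2 : p.2 with _ | kp
          · -- both none
            have hp1 : p.1 = x := by
              rcases hp with h | ⟨k, hk, _⟩
              · exact h
              · rw [hp2] at hk; simp at hk
            exact hnepq (Prod.ext (hp1.trans hq1.symm) (hp2.trans hq2.symm))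
          · -- p.2 = some kp, p.1 ≠ x (else h1)
            have hp1 : p.1 ≠ x := fun hh => h1 ⟨hh, by rw [hp2]; exact Option.some_ne_none _⟩
            rcases hbig with (⟨_, hno⟩ | ⟨_, u, v, _, hv, _⟩) |
                (⟨heq, _⟩ | ⟨_, u, v, hu, _, _⟩)
            · rw [hp2] at hno; simp at hno
            · rw [hq2] at hv; simp at hv
            · exact hp1 (heq.symm.trans hq1)  -- heq : q.1 = p.1
            · rw [hq2] at hu; simp at hu
        · -- q.2 = some kq; kq ∈ {1, n-1}, q.1 ≠ x or ... use bag
          have hqk : (kq : ℕ) = 1 ∨ (kq : ℕ) = n - 1 := by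
            rcases hq with h | ⟨k, hk, hk2⟩
            · exact absurd ⟨h, by rw [hq2]; exact Option.some_ne_none _⟩ h2
            · rw [hq2] at hk
              obtain rfl : k = kq := (Option.some.inj hk).symm
              exact hk2
          rcases hp2 : p.2 with _ | kp
          · -- p.2 = none, p.1 = x: adjacency impossible
            have hp1 : p.1 = x := by
              rcases hp with h | ⟨k, hk, _⟩
              · exact h
              · rw [hp2] at hk; simp at hk
            have hq1 : q.1 ≠ x := fun hh => h2 ⟨hh, by rw [hq2]; exact Option.some_ne_none _⟩
            rcases hbig with (⟨heq, _⟩ | ⟨_, u, v, hu, _, _⟩) |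
                (⟨_, hno⟩ | ⟨_, u, v, _, hv, _⟩)
            · exact hq1 (heq.symm.trans hp1)
            · rw [hp2] at hu; simp at hu
            · rw [hq2] at hno; simp at hno
            · rw [hp2] at hv; simp at hv
          · -- both some; kp ∈ {1,n-1} too; cyc adjacency impossible
            have hpk : (kp : ℕ) = 1 ∨ (kp : ℕ) = n - 1 := by
              rcases hp with h | ⟨k, hk, hk2⟩
              · exact absurd ⟨h, by rw [hp2]; exact Option.some_ne_none _⟩ h1
              · rw [hp2] at hk
                obtain rfl : k = kp := (Option.some.inj hk).symm
                exact hk2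
            rcases hbig with (⟨_, hno⟩ | ⟨_, u, v, hu, hv, huv⟩) |
                (⟨_, hno⟩ | ⟨_, u, v, hu, hv, huv⟩)
            · rw [hp2] at hno; simp at hno
            · rw [hp2] at hu; rw [hq2] at hv
              obtain rfl : kp = u := Option.some.inj hu
              obtain rfl : kq = v := Option.some.inj hv
              exact cyc_not_adj_ends hn huv hpk hqk
            · rw [hq2] at hno; simp at hno
            · rw [hq2] at hu; rw [hp2] at hv
              obtain rfl : kq = u := Option.some.inj hu
              obtain rfl : kp = v := Option.some.inj hv
              exact cyc_not_adj_ends hn huv hqk hpk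

end Stmt13Aux

/-- Lemma 5: for `n ≥ 4` and `m ≥ 1`, `R_m(C_n)` has tree-chromatic number `2`. -/
theorem stmt_13 (n m : ℕ) (hn : 4 ≤ n) (hm : 1 ≤ m) :
    treeChromatic (Rm (cyc n) m) = 2 := by
  classical
  have hmem : (2 : ℕ) ∈ {k | ∃ (ι : Type) (T : SimpleGraph ι)
      (B : ι → Set (Fin m × Option (Fin n))),
      IsTreeDecomp (Rm (cyc n) m) T B ∧ ∀ t, ((Rm (cyc n) m).induce (B t)).Colorable k} := by
    refine ⟨Option (Fin m), starT m, bagB n m,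
      ⟨starT_isTree m, fun p => ⟨some p.1, bag_vertex_cover p⟩,
        bag_edge_cover hn, bag_conn hn⟩, bag_color hn⟩
  have hlow : ∀ k ∈ {k | ∃ (ι : Type) (T : SimpleGraph ι)
      (B : ι → Set (Fin m × Option (Fin n))),
      IsTreeDecomp (Rm (cyc n) m) T B ∧ ∀ t, ((Rm (cyc n) m).induce (B t)).Colorable k},
      2 ≤ k := by
    rintro k ⟨ι, T, B, ⟨htree, hvc, hec, hconn⟩, hcol⟩
    have hadj : (Rm (cyc n) m).Adj (⟨0, by omega⟩, none) (⟨0, by omega⟩, some ⟨0, by omega⟩) := by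
      rw [rm_adj]
      refine ⟨fun h => ?_, Or.inl (Or.inl ⟨rfl, rfl⟩)⟩
      · have := congrArg Prod.snd h
        simp at this
    obtain ⟨t, hpt, hqt⟩ := hec _ _ hadj
    obtain ⟨C⟩ := hcol t
    have hne := C.valid (show ((Rm (cyc n) m).induce (B t)).Adj ⟨_, hpt⟩ ⟨_, hqt⟩ from hadj)
    match k, C, hne with
    | 0, C, hne => exact (C ⟨_, hpt⟩).elim0
    | 1, C, hne => exact absurd (Subsingleton.elim _ _) hne
    | (k + 2), C, hne => omega
  exact le_antisymm (Nat.sInf_le hmem) (hlow _ (Nat.sInf_mem ⟨2, hmem⟩))
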